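/- Let C_α be the Toeplitz matrices defined recursively by C₁ = (4×4 matrix with −1 on diagonal, 1 off diagonal) and C_{α+1} = 4×4 block matrix with −C_α on the block diagonal and C_α off it. Then the quadratic form C_α(z) = Σ_{m,n=1}^{4^α} (C_α)_{mn} z_m z_n satisfies |C_α(z)| ≤ 8^α for all z in the closed unit polydisc D^{4^α}. -/

import Mathlib

open Filter Topology

/-- Toeplitz's matrices: `toepT 1` is the `4 × 4` matrix with `-1` on the diagonal and `1`
off it, and `toepT (α+1)` is the `4 × 4` block matrix with blocks `-toepT α` on the
diagonal and `toepT α` off it; the index set of `toepT α` is `Fin α → Fin 4`. -/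
def toepT : (α : ℕ) → Matrix (Fin α → Fin 4) (Fin α → Fin 4) ℝ
  | 0 => 1
  | (α + 1) => fun i j =>
      (if i 0 = j 0 then (-1 : ℝ) else 1) *
        toepT α (fun k => i k.succ) (fun k => j k.succ)

/-- The quadratic form of the Toeplitz matrix `C_α` satisfies
`|C_α(z)| ≤ 8^α` for all `z` in the closed unit polydisc `D^{4^α}`. -/
lemma toepT_apply (α : ℕ) (i j : Fin α → Fin 4) :
    toepT α i j = ∏ k, (if i k = j k then (-1 : ℝ) else 1) := by
  induction α with
  | zero =>
    simp [toepT, Matrix.one_apply, Subsingleton.elim i j]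
  | succ α ih =>
    simp only [toepT, ih, Fin.prod_univ_succ]

lemma inner4 (a b : Fin 4) :
    ∑ t : Fin 4, (if t = a then (-1 : ℝ) else 1) * (if t = b then (-1 : ℝ) else 1)
      = if a = b then 4 else 0 := by
  fin_cases a <;> fin_cases b <;> simp [Fin.sum_univ_four] <;> norm_num

lemma toepT_orth (α : ℕ) (n n' : Fin α → Fin 4) :
    ∑ m, toepT α m n * toepT α m n' = if n = n' then (4 : ℝ) ^ α else 0 := by
  simp only [toepT_apply, ← Finset.prod_mul_distrib]
  rw [← Fintype.prod_sum (f := fun k t => (if t = n k then (-1:ℝ) else 1) * (if t = n' k then (-1:ℝ) else 1))]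
  simp only [inner4]
  by_cases h : n = n'
  · simp [h]
  · obtain ⟨k, hk⟩ := Function.ne_iff.mp h
    rw [if_neg h]
    exact Finset.prod_eq_zero (Finset.mem_univ k) (by simp [hk])

theorem statement14 (α : ℕ) (hα : 1 ≤ α) (z : (Fin α → Fin 4) → ℂ)
    (hz : ∀ i, ‖z i‖ ≤ 1) :
    ‖∑ m, ∑ n, (toepT α m n : ℂ) * z m * z n‖ ≤ 8 ^ α := by
  classical
  set w : (Fin α → Fin 4) → ℂ := fun m => ∑ n, (toepT α m n : ℂ) * z n with hw
  have hQ : ∑ m, ∑ n, (toepT α m n : ℂ) * z m * z n = ∑ m, z m * w m := by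
    refine Finset.sum_congr rfl fun m _ => ?_
    rw [hw, Finset.mul_sum]
    exact Finset.sum_congr rfl fun n _ => by ring
  have hcard : Fintype.card (Fin α → Fin 4) = 4 ^ α := by
    simp [Fintype.card_fun]
  have h1 : ∑ m, ‖z m‖ ^ 2 ≤ (4 : ℝ) ^ α := by
    calc ∑ m, ‖z m‖ ^ 2 ≤ ∑ _m : (Fin α → Fin 4), (1 : ℝ) :=
          Finset.sum_le_sum fun m _ => pow_le_one₀ (norm_nonneg _) (hz m)
      _ = (4 : ℝ) ^ α := by simp [hcard]
  have horth : ∀ n n' : (Fin α → Fin 4),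
      ∑ m, (toepT α m n : ℂ) * (toepT α m n') = if n = n' then (4 : ℂ) ^ α else 0 := by
    intro n n'
    have h := toepT_orth α n n'
    calc ∑ m, ((toepT α m n : ℂ) * toepT α m n')
        = ((∑ m, toepT α m n * toepT α m n' : ℝ) : ℂ) := by push_cast; rfl
      _ = _ := by rw [h]; split <;> push_cast <;> rfl
  have h2 : ∑ m, ‖w m‖ ^ 2 = (4 : ℝ) ^ α * ∑ n, ‖z n‖ ^ 2 := by
    have key : ∑ m, w m * (starRingEnd ℂ) (w m)
        = (4 : ℂ) ^ α * ∑ n, z n * (starRingEnd ℂ) (z n) := by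
      calc ∑ m, w m * (starRingEnd ℂ) (w m)
          = ∑ m, ∑ n, ∑ n', ((toepT α m n : ℂ) * (toepT α m n'))
              * (z n * (starRingEnd ℂ) (z n')) := by
            refine Finset.sum_congr rfl fun m _ => ?_
            rw [hw]
            simp only [map_sum, map_mul, Complex.conj_ofReal, Finset.sum_mul_sum]
            exact Finset.sum_congr rfl fun n _ => Finset.sum_congr rfl fun n' _ => by ring
        _ = ∑ n, ∑ n', (∑ m, (toepT α m n : ℂ) * (toepT α m n'))
              * (z n * (starRingEnd ℂ) (z n')) := by
            rw [Finset.sum_comm]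
            refine Finset.sum_congr rfl fun n _ => ?_
            rw [Finset.sum_comm]
            exact Finset.sum_congr rfl fun n' _ => (Finset.sum_mul _ _ _).symm
        _ = (4 : ℂ) ^ α * ∑ n, z n * (starRingEnd ℂ) (z n) := by
            simp only [horth, ite_mul, zero_mul, Finset.sum_ite_eq, Finset.mem_univ, if_true]
            rw [Finset.mul_sum]
    have e : ∀ u : ℂ, ((‖u‖ : ℂ)) ^ 2 = u * (starRingEnd ℂ) u := fun u => by
      rw [← Complex.ofReal_pow, Complex.mul_conj, Complex.normSq_eq_norm_sq]
    have hc : ((∑ m, ‖w m‖ ^ 2 : ℝ) : ℂ) = (((4 : ℝ) ^ α * ∑ n, ‖z n‖ ^ 2 : ℝ) : ℂ) := by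
      push_cast
      simp only [e]
      exact key
    exact_mod_cast hc
  calc ‖∑ m, ∑ n, (toepT α m n : ℂ) * z m * z n‖ = ‖∑ m, z m * w m‖ := by rw [hQ]
    _ ≤ ∑ m, ‖z m * w m‖ := norm_sum_le _ _
    _ = ∑ m, ‖z m‖ * ‖w m‖ := by simp [norm_mul]
    _ ≤ Real.sqrt (∑ m, ‖z m‖ ^ 2) * Real.sqrt (∑ m, ‖w m‖ ^ 2) :=
        Real.sum_mul_le_sqrt_mul_sqrt _ _ _
    _ ≤ Real.sqrt ((4 : ℝ) ^ α) * Real.sqrt ((4 : ℝ) ^ α * (4 : ℝ) ^ α) := by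
        apply mul_le_mul (Real.sqrt_le_sqrt h1) _ (Real.sqrt_nonneg _) (Real.sqrt_nonneg _)
        refine Real.sqrt_le_sqrt ?_
        rw [h2]
        exact mul_le_mul_of_nonneg_left h1 (by positivity)
    _ = 8 ^ α := by
        rw [Real.sqrt_mul_self (by positivity),
          show (4 : ℝ) ^ α = ((2 : ℝ) ^ α) ^ 2 by rw [sq, ← mul_pow]; norm_num,
          Real.sqrt_sq (by positivity), ← pow_mul, ← pow_add,
          show (8 : ℝ) = 2 ^ 3 by norm_num, ← pow_mul]
        congr 1
        ring
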